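/- Let G be a connected F-free finite simple graph and let M be a module of G with at least two vertices and M ≠ V(G). Then the subgraph G[M] induced by M contains no induced path on four vertices and no induced cycle on four vertices. -/

import Mathlib

open SimpleGraph

/-- `M` is a module of `G`: every vertex outside `M` is adjacent to all
vertices of `M` or to none of them. -/
def IsModule {V : Type*} (G : SimpleGraph V) (M : Set V) : Prop :=
  ∀ x ∉ M, (∀ a ∈ M, G.Adj x a) ∨ (∀ a ∈ M, ¬ G.Adj x a)

/-- A module is strong if it overlaps no other module. -/
def IsStrongModule {V : Type*} (G : SimpleGraph V) (M : Set V) : Prop :=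
  IsModule G M ∧
    ∀ M' : Set V, IsModule G M' → (M ∩ M').Nonempty → M ⊆ M' ∨ M' ⊆ M

/-- A nonempty strong module ≠ V(G) whose only proper strong superset is V(G). -/
def IsMaximalStrongModule {V : Type*} (G : SimpleGraph V) (M : Set V) : Prop :=
  IsStrongModule G M ∧ M.Nonempty ∧ M ≠ Set.univ ∧
    ∀ M' : Set V, IsStrongModule G M' → M ⊂ M' → M' = Set.univ

/-- Quotient graph defined by a family `P` of vertex sets: two members are
adjacent iff they are distinct and completely adjacent in `G`. -/
def QuotientOn {V : Type*} (G : SimpleGraph V) (P : Set (Set V)) : SimpleGraph P where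
  Adj A B := A ≠ B ∧ ∀ a ∈ (A : Set V), ∀ b ∈ (B : Set V), G.Adj a b
  symm := by
    constructor
    intro A B h
    exact ⟨Ne.symm h.1, fun b hb a ha => (h.2 a ha b hb).symm⟩
  loopless := by
    constructor
    intro A h
    exact h.1 rfl

/-- The quotient graph Q̃(G), on the maximal strong modules of `G`. -/
def QuotientGraph {V : Type*} (G : SimpleGraph V) :
    SimpleGraph {M : Set V | IsMaximalStrongModule G M} :=
  QuotientOn G {M : Set V | IsMaximalStrongModule G M}

/-- A graph is prime if it has at least four vertices and all its modules are
trivial (empty, singletons, or the whole vertex set). -/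
def IsPrimeGraph {W : Type*} (H : SimpleGraph W) : Prop :=
  4 ≤ Nat.card W ∧
    ∀ M : Set W, IsModule H M → M = ∅ ∨ M = Set.univ ∨ ∃ w, M = {w}

/-- `G` contains an induced copy of `H`. -/
def HasInducedCopy {W V : Type*} (H : SimpleGraph W) (G : SimpleGraph V) : Prop :=
  ∃ f : W ↪ V, ∀ a b : W, G.Adj (f a) (f b) ↔ H.Adj a b

/-- The path on four vertices. -/
def GraphP4 : SimpleGraph (Fin 4) :=
  SimpleGraph.fromRel fun a b =>
    (a, b) ∈ ([(0, 1), (1, 2), (2, 3)] : List (Fin 4 × Fin 4))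

/-- The cycle on four vertices. -/
def GraphC4 : SimpleGraph (Fin 4) :=
  SimpleGraph.fromRel fun a b =>
    (a, b) ∈ ([(0, 1), (1, 2), (2, 3), (0, 3)] : List (Fin 4 × Fin 4))

/-- The bull: triangle 0,1,2 with pendant 3 at 0 and pendant 4 at 2. -/
def GraphBull : SimpleGraph (Fin 5) :=
  SimpleGraph.fromRel fun a b =>
    (a, b) ∈ ([(0, 1), (0, 2), (1, 2), (0, 3), (2, 4)] : List (Fin 5 × Fin 5))

/-- The dart: triangle 0,1,2; vertex 4 adjacent exactly to 0 and 2;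
vertex 3 adjacent exactly to 0. -/
def GraphDart : SimpleGraph (Fin 5) :=
  SimpleGraph.fromRel fun a b =>
    (a, b) ∈ ([(0, 1), (0, 2), (1, 2), (0, 4), (2, 4), (0, 3)] : List (Fin 5 × Fin 5))

/-- The fox: adjacent vertices 0,1 and pairwise nonadjacent 2,3,4, each
adjacent to both 0 and 1 (K5 minus a triangle). -/
def GraphFox : SimpleGraph (Fin 5) :=
  SimpleGraph.fromRel fun a b =>
    (a, b) ∈ ([(0, 1), (0, 2), (0, 3), (0, 4), (1, 2), (1, 3), (1, 4)] : List (Fin 5 × Fin 5))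

/-- The gem: induced path 0-1-2-3 plus vertex 4 adjacent to all of them. -/
def GraphGem : SimpleGraph (Fin 5) :=
  SimpleGraph.fromRel fun a b =>
    (a, b) ∈ ([(0, 1), (1, 2), (2, 3), (0, 4), (1, 4), (2, 4), (3, 4)] : List (Fin 5 × Fin 5))

/-- `G` has no induced subgraph isomorphic to a member of
F = {C4, bull, dart, fox, gem}. -/
def FFree {V : Type*} (G : SimpleGraph V) : Prop :=
  ¬ HasInducedCopy GraphC4 G ∧ ¬ HasInducedCopy GraphBull G ∧
  ¬ HasInducedCopy GraphDart G ∧ ¬ HasInducedCopy GraphFox G ∧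
  ¬ HasInducedCopy GraphGem G

/-- `X` is an association set of `G`: the graph `G - X` has no induced `P₃`,
i.e., every component of `G - X` is a clique. -/
def IsAssociationSet {V : Type*} (G : SimpleGraph V) (X : Set V) : Prop :=
  ∀ a b c : V, a ∉ X → b ∉ X → c ∉ X →
    G.Adj a b → G.Adj b c → a ≠ c → G.Adj a c

/-- `X` is a dissociation set of `G`: the graph `G - X` has no `P₃` subgraph,
i.e., every component of `G - X` has at most two vertices. -/
def IsDissociationSet {V : Type*} (G : SimpleGraph V) (X : Set V) : Prop :=
  ∀ a b c : V, a ∉ X → b ∉ X → c ∉ X → G.Adj a b → G.Adj b c → a = c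

/-- Minimum cardinality of an association set of `G`. -/
noncomputable def optAsso {V : Type*} (G : SimpleGraph V) : ℕ :=
  sInf {n : ℕ | ∃ X : Set V, IsAssociationSet G X ∧ X.ncard = n}

/-- Minimum cardinality of a dissociation set of `G`. -/
noncomputable def optDiss {V : Type*} (G : SimpleGraph V) : ℕ :=
  sInf {n : ℕ | ∃ X : Set V, IsDissociationSet G X ∧ X.ncard = n}

instance : DecidableRel GraphP4.Adj := fun a b =>
  decidable_of_iff _ (SimpleGraph.fromRel_adj _ a b).symm

instance : DecidableRel GraphGem.Adj := fun a b =>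
  decidable_of_iff _ (SimpleGraph.fromRel_adj _ a b).symm

lemma cross_edge {V : Type*} (G : SimpleGraph V) (M : Set V) :
    ∀ {y a : V}, G.Walk y a → y ∉ M → a ∈ M → ∃ x ∉ M, ∃ m ∈ M, G.Adj x m := by
  intro y a w
  induction w with
  | nil => intro h h'; exact absurd h' h
  | @cons u v w h p ih =>
    intro hy ha
    by_cases hb : v ∈ M
    · exact ⟨u, hy, v, hb, h⟩
    · exact ih hb ha

/-- In a connected F-free graph, every nontrivial module `M`
(with at least two vertices and `M ≠ V(G)`) induces a graph with no induced
`P₄` and no induced `C₄`. -/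
theorem stmt_13 {V : Type*} [Fintype V] (G : SimpleGraph V) (hconn : G.Connected)
    (hF : FFree G) (M : Set V) (hmod : IsModule G M) (h2 : 2 ≤ M.ncard)
    (hne : M ≠ Set.univ) :
    ¬ HasInducedCopy GraphP4 (G.induce M) ∧ ¬ HasInducedCopy GraphC4 (G.induce M) := by
  obtain ⟨hC4, hBull, hDart, hFox, hGem⟩ := hF
  -- a vertex outside M adjacent to all of M
  have hMne : M.Nonempty := by
    rcases Set.eq_empty_or_nonempty M with h | h
    · simp [h] at h2
    · exact h
  obtain ⟨m0, hm0⟩ := hMne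
  obtain ⟨y, hy⟩ : ∃ y, y ∉ M := by
    by_contra h
    push_neg at h
    exact hne (Set.eq_univ_of_forall h)
  obtain ⟨x, hx, m, hm, hxm⟩ :=
    cross_edge G M ((hconn.preconnected y m0).some) hy hm0
  have hxall : ∀ a ∈ M, G.Adj x a := by
    rcases hmod x hx with h | h
    · exact h
    · exact absurd hxm (h m hm)
  constructor
  · -- no P4 : else gem with x
    rintro ⟨f, hf⟩
    apply hGem
    have key : ∀ i j : Fin 4, G.Adj ↑(f i) ↑(f j) ↔ GraphP4.Adj i j := hf
    have gemP4 : ∀ i j : Fin 4,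
        GraphGem.Adj i.castSucc j.castSucc ↔ GraphP4.Adj i j := by decide
    have gemLast : ∀ i : Fin 4, GraphGem.Adj i.castSucc (Fin.last 4) := by decide
    set F : Fin 5 → V := Fin.lastCases x (fun i => ↑(f i)) with hFdef
    have hFc : ∀ i : Fin 4, F i.castSucc = ↑(f i) := fun i => by
      simp [hFdef]
    have hFl : F (Fin.last 4) = x := by simp only [hFdef, Fin.lastCases_last]
    have fnex : ∀ i : Fin 4, (↑(f i) : V) ≠ x := fun i he => hx (he ▸ (f i).2)
    have hinj : Function.Injective F := by
      intro a b hab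
      induction a using Fin.lastCases with
      | last =>
        induction b using Fin.lastCases with
        | last => rfl
        | cast j => rw [hFl, hFc] at hab; exact absurd hab.symm (fnex j)
      | cast i =>
        induction b using Fin.lastCases with
        | last => rw [hFl, hFc] at hab; exact absurd hab (fnex i)
        | cast j =>
          rw [hFc, hFc] at hab
          exact congrArg Fin.castSucc (f.injective (Subtype.ext hab))
    refine ⟨⟨F, hinj⟩, ?_⟩
    have hxf : ∀ i : Fin 4, G.Adj x ↑(f i) := fun i => hxall _ (f i).2
    intro a b
    show G.Adj (F a) (F b) ↔ _
    induction a using Fin.lastCases with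
    | last =>
      induction b using Fin.lastCases with
      | last => simp
      | cast j =>
        rw [hFl, hFc]
        exact iff_of_true (hxf j) (gemLast j).symm
    | cast i =>
      induction b using Fin.lastCases with
      | last =>
        rw [hFl, hFc]
        exact iff_of_true (hxf i).symm (gemLast i)
      | cast j => rw [hFc, hFc, key, gemP4]
  · -- no C4 : C4 is in F
    rintro ⟨f, hf⟩
    exact hC4 ⟨f.trans (Function.Embedding.subtype _), fun a b => hf a b⟩
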